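/- Let O be a linear cyclic operad with multiplication, and let C*_λ(O) ⊂ C*(O) denote the cyclic cochains, i.e. f ∈ O(n) with τₙf = (-1)ⁿf. Then for f ∈ C^m_λ(O) and g ∈ C^n_λ(O), the Gerstenhaber bracket {f,g} := f∘̄g − (-1)^{(m-1)(n-1)}g∘̄f (where f∘̄g = (-1)^{(m-1)(n-1)}Σᵢ(-1)^{(n-1)(i-1)}f∘ᵢg) satisfies τ_{m+n-1}{f,g} = (-1)^{m+n-1}{f,g}; in particular the cyclic cochains are closed under the bracket. -/

import Mathlib

/-- A non-symmetric (linear) operad in `k`-modules, via partial compositions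
`comp i : O m → O n → O (m+n-1)` (`i = 1,…,m`), identity `one ∈ O 1`. -/
structure NSOperad (k : Type*) [CommRing k] where
  O : ℕ → Type*
  [addCommGroup : ∀ n, AddCommGroup (O n)]
  [module : ∀ n, Module k (O n)]
  one : O 1
  comp : ∀ {m n : ℕ}, ℕ → O m → O n → O (m + n - 1)
  comp_add_left : ∀ {m n : ℕ} (i : ℕ) (f f' : O m) (g : O n),
    comp i (f + f') g = comp i f g + comp i f' g
  comp_add_right : ∀ {m n : ℕ} (i : ℕ) (f : O m) (g g' : O n),
    comp i f (g + g') = comp i f g + comp i f g'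
  comp_smul_left : ∀ {m n : ℕ} (i : ℕ) (c : k) (f : O m) (g : O n),
    comp i (c • f) g = c • comp i f g
  comp_smul_right : ∀ {m n : ℕ} (i : ℕ) (c : k) (f : O m) (g : O n),
    comp i f (c • g) = c • comp i f g
  comp_one : ∀ {n : ℕ} (i : ℕ), 1 ≤ i → i ≤ n → ∀ f : O n, comp i f one = f
  one_comp : ∀ {n : ℕ} (f : O n), comp 1 one f = (show n = 1 + n - 1 by omega) ▸ f
  assoc_seq : ∀ {m n p : ℕ} (i j : ℕ) (f : O m) (g : O n) (h : O p)
    (hi1 : 1 ≤ i) (hi2 : i ≤ m) (hj1 : 1 ≤ j) (hj2 : j ≤ n),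
    comp (i + j - 1) (comp i f g) h =
      (show m + (n + p - 1) - 1 = m + n - 1 + p - 1 by omega) ▸ comp i f (comp j g h)
  assoc_par : ∀ {m n p : ℕ} (i j : ℕ) (f : O m) (g : O n) (h : O p)
    (hi1 : 1 ≤ i) (hij : i < j) (hj : j ≤ m) (hn : 1 ≤ n),
    comp (j + n - 1) (comp i f g) h =
      (show m + p - 1 + n - 1 = m + n - 1 + p - 1 by omega) ▸ comp i (comp j f h) g

attribute [instance] NSOperad.addCommGroup NSOperad.module

/-- Cast along an equality of arities. -/
def NSOperad.cst {k : Type*} [CommRing k] (P : NSOperad k) {a b : ℕ} (h : a = b)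
    (x : P.O a) : P.O b := h ▸ x

/-- An operad with multiplication: `μ ∈ O(2)`, `e ∈ O(0)` with
`μ∘₁μ = μ∘₂μ` and `μ∘₁e = id = μ∘₂e`. -/
structure OperadWithMult (k : Type*) [CommRing k] extends NSOperad k where
  mu : O 2
  e : O 0
  mu_mu : comp 1 mu mu = comp 2 mu mu
  mu_e_one : comp 1 mu e = one
  mu_e_two : comp 2 mu e = one

variable {k : Type*} [CommRing k]

/-- A cyclic operad with multiplication: an operad with multiplication together
with cyclic operators `τₙ : O(n) → O(n)` satisfying `τₙ^{n+1} = id`,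
`τ_{m+n-1}(f∘₁g) = τₙg ∘ₙ τₘf`, `τ_{m+n-1}(f∘ᵢg) = τₘf ∘_{i-1} g` (`2 ≤ i ≤ m`)
and `τ₂μ = μ`. -/
structure CyclicOperadWithMult (k : Type*) [CommRing k] extends OperadWithMult k where
  tau : ∀ {n : ℕ}, O n → O n
  tau_add : ∀ {n : ℕ} (f g : O n), tau (f + g) = tau f + tau g
  tau_smul : ∀ {n : ℕ} (c : k) (f : O n), tau (c • f) = c • tau f
  tau_pow : ∀ {n : ℕ} (f : O n), (fun x : O n => tau x)^[n + 1] f = f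
  tau_comp_one : ∀ {m n : ℕ} (f : O m) (g : O n) (hm : 1 ≤ m) (hn : 1 ≤ n),
    tau (comp 1 f g) = (show n + m - 1 = m + n - 1 by omega) ▸ comp n (tau g) (tau f)
  tau_comp : ∀ {m n : ℕ} (i : ℕ) (f : O m) (g : O n) (h2 : 2 ≤ i) (him : i ≤ m),
    tau (comp i f g) = comp (i - 1) (tau f) g
  tau_mu : tau mu = mu

variable {k : Type*} [CommRing k]

/-- The pre-Lie operation
`f∘̄g = (-1)^{(m-1)(n-1)} Σᵢ (-1)^{(n-1)(i-1)} f∘ᵢg`. -/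
def obar (P : CyclicOperadWithMult k) {m n : ℕ} (f : P.O m) (g : P.O n) :
    P.O (m + n - 1) :=
  (-1 : ℤ) ^ ((m - 1) * (n - 1)) •
    ∑ i ∈ Finset.range m, (-1 : ℤ) ^ ((n - 1) * i) • P.comp (i + 1) f g

/-- The Gerstenhaber bracket `{f,g} = f∘̄g − (-1)^{(m-1)(n-1)} g∘̄f`. -/
def brk (P : CyclicOperadWithMult k) {m n : ℕ} (f : P.O m) (g : P.O n) :
    P.O (m + n - 1) :=
  obar P f g -
    (-1 : ℤ) ^ ((m - 1) * (n - 1)) • P.cst (by omega) (obar P g f)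


section Helpers

lemma neg_one_pow_congr_nat {a b : ℕ} (h : a % 2 = b % 2) : ((-1:ℤ))^a = (-1)^b := by
  rcases Nat.even_or_odd a with ha | ha
  · have hb : Even b := by rw [Nat.even_iff] at *; omega
    rw [ha.neg_one_pow, hb.neg_one_pow]
  · have hb : Odd b := by rw [Nat.odd_iff] at *; omega
    rw [ha.neg_one_pow, hb.neg_one_pow]

variable (P : CyclicOperadWithMult k)

def tauHom (n : ℕ) : P.O n →+ P.O n := AddMonoidHom.mk' P.tau P.tau_add

lemma tau_zsmul {n : ℕ} (c : ℤ) (x : P.O n) : P.tau (c • x) = c • P.tau x :=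
  map_zsmul (tauHom P n) c x

lemma tau_sum {n : ℕ} {ι : Type*} (s : Finset ι) (F : ι → P.O n) :
    P.tau (∑ i ∈ s, F i) = ∑ i ∈ s, P.tau (F i) := map_sum (tauHom P n) F s

lemma tau_sub {n : ℕ} (x y : P.O n) : P.tau (x - y) = P.tau x - P.tau y :=
  map_sub (tauHom P n) x y

lemma cst_zsmul {a b : ℕ} (h : a = b) (c : ℤ) (x : P.O a) :
    P.cst h (c • x) = c • P.cst h x := by subst h; rfl

lemma cst_add {a b : ℕ} (h : a = b) (x y : P.O a) :
    P.cst h (x + y) = P.cst h x + P.cst h y := by subst h; rfl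

lemma cst_sub {a b : ℕ} (h : a = b) (x y : P.O a) :
    P.cst h (x - y) = P.cst h x - P.cst h y := by subst h; rfl

lemma tau_cst {a b : ℕ} (h : a = b) (x : P.O a) :
    P.tau (P.cst h x) = P.cst h (P.tau x) := by subst h; rfl

lemma cst_cst {a b : ℕ} (h : a = b) (h2 : b = a) (x : P.O a) :
    P.cst h2 (P.cst h x) = x := by subst h; rfl

lemma comp_zsmul_left {m n : ℕ} (i : ℕ) (c : ℤ) (f : P.O m) (g : P.O n) :
    P.comp i (c • f) g = c • P.comp i f g :=
  map_zsmul (AddMonoidHom.mk' (fun f => P.comp i f g)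
    (fun a b => P.comp_add_left i a b g)) c f

lemma comp_zsmul_right {m n : ℕ} (i : ℕ) (c : ℤ) (f : P.O m) (g : P.O n) :
    P.comp i f (c • g) = c • P.comp i f g :=
  map_zsmul (AddMonoidHom.mk' (fun g => P.comp i f g)
    (fun a b => P.comp_add_right i f a b)) c g

lemma tau_comp_one' {m n : ℕ} (f : P.O m) (g : P.O n) (hm : 1 ≤ m) (hn : 1 ≤ n) :
    P.tau (P.comp 1 f g) =
      P.cst (by omega : n + m - 1 = m + n - 1) (P.comp n (P.tau g) (P.tau f)) :=
  P.tau_comp_one f g hm hn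

end Helpers

lemma tau_obar (P : CyclicOperadWithMult k) (m' n' : ℕ)
    (f : P.O (m' + 1)) (g : P.O (n' + 1))
    (hf : P.tau f = (-1 : ℤ) ^ (m' + 1) • f)
    (hg : P.tau g = (-1 : ℤ) ^ (n' + 1) • g) :
    P.tau (obar P f g) =
      (-1 : ℤ) ^ (m' + n' + 1) • obar P f g
      + (-1 : ℤ) ^ ((m' + 1) * (n' + 1) + 1) •
          P.cst (by omega : (n'+1) + (m'+1) - 1 = (m'+1) + (n'+1) - 1)
            (P.comp (n' + 1) g f)
      - (-1 : ℤ) ^ (m' + n' + 1) • P.comp (m' + 1) f g := by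
  rw [obar, tau_zsmul, tau_sum]
  simp only [Nat.add_sub_cancel]
  rw [Finset.sum_range_succ']
  have h0 : P.tau ((-1:ℤ) ^ (n' * 0) • P.comp (0 + 1) f g)
      = (-1:ℤ) ^ (m' + n' + 2) • P.cst (by omega : (n'+1) + (m'+1) - 1 = (m'+1) + (n'+1) - 1)
          (P.comp (n' + 1) g f) := by
    rw [tau_zsmul]
    simp only [Nat.mul_zero, pow_zero, one_smul, zero_add]
    rw [tau_comp_one' P f g (by omega) (by omega), hf, hg, comp_zsmul_left,
      comp_zsmul_right, cst_zsmul, cst_zsmul, smul_smul, ← pow_add]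
    congr 1
    exact neg_one_pow_congr_nat (by omega)
  have hi : ∀ i ∈ Finset.range m',
      P.tau ((-1:ℤ) ^ (n' * (i + 1)) • P.comp ((i + 1) + 1) f g)
        = (-1:ℤ) ^ (n' * (i + 1) + (m' + 1)) • P.comp (i + 1) f g := by
    intro i hi
    rw [Finset.mem_range] at hi
    rw [tau_zsmul, P.tau_comp (i + 2) f g (by omega) (by omega), hf,
      comp_zsmul_left, smul_smul, ← pow_add]
    norm_num
  rw [Finset.sum_congr rfl hi, h0]
  rw [Finset.sum_range_succ]
  simp only [Finset.smul_sum, smul_add, smul_smul, ← pow_add]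
  have hsum2 : ∀ x ∈ Finset.range m',
      ((-1:ℤ)) ^ (m' * n' + (n' * (x + 1) + (m' + 1))) • P.comp (x + 1) f g
        = (-1:ℤ) ^ (m' + n' + 1 + (m' * n' + n' * x)) • P.comp (x + 1) f g := by
    intro x _
    congr 1
    ring
  rw [Finset.sum_congr rfl hsum2]
  have hc1 : ((-1:ℤ)) ^ (m' * n' + (m' + n' + 2)) = (-1:ℤ) ^ ((m' + 1) * (n' + 1) + 1) := by
    congr 1
    ring
  have hc2 : ((-1:ℤ)) ^ (m' + n' + 1 + (m' * n' + n' * m')) = (-1:ℤ) ^ (m' + n' + 1) := by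
    rw [show m' + n' + 1 + (m' * n' + n' * m') = (m' + n' + 1) + 2 * (m' * n') by ring,
      pow_add, pow_mul, neg_one_sq, one_pow, mul_one]
  rw [hc1, hc2]
  abel

/-- Let `O` be a linear cyclic operad with multiplication and
let `f, g` be cyclic cochains (`τₘf = (-1)^m f`, `τₙg = (-1)^n g`).  Then the
Gerstenhaber bracket satisfies `τ_{m+n-1}{f,g} = (-1)^{m+n-1}{f,g}`; in
particular the cyclic cochains are closed under the bracket. -/
theorem stmt19 (P : CyclicOperadWithMult k) {m n : ℕ} (hm : 1 ≤ m) (hn : 1 ≤ n)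
    (f : P.O m) (g : P.O n)
    (hf : P.tau f = (-1 : ℤ) ^ m • f) (hg : P.tau g = (-1 : ℤ) ^ n • g) :
    P.tau (brk P f g) = (-1 : ℤ) ^ (m + n - 1) • brk P f g := by
  obtain ⟨m', rfl⟩ : ∃ m', m = m' + 1 := ⟨m - 1, by omega⟩
  obtain ⟨n', rfl⟩ : ∃ n', n = n' + 1 := ⟨n - 1, by omega⟩
  rw [brk, tau_sub, tau_zsmul, tau_cst]
  simp only [Nat.add_sub_cancel, show m' + 1 + (n' + 1) - 1 = m' + n' + 1 by omega,
    show n' + 1 + (m' + 1) - 1 = n' + m' + 1 by omega]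
  rw [tau_obar P m' n' f g hf hg, tau_obar P n' m' g f hg hf]
  rw [cst_sub, cst_add, cst_zsmul, cst_zsmul, cst_zsmul, cst_cst]
  simp only [smul_add, smul_sub, smul_smul, ← pow_add]
  have hC : ((-1:ℤ)) ^ ((m' + 1) * (n' + 1) + 1) = -((-1:ℤ)) ^ (m' * n' + (n' + m' + 1)) := by
    rw [show (m' + 1) * (n' + 1) + 1 = (m' * n' + (n' + m' + 1)) + 1 by ring, pow_succ,
      mul_neg_one]
  have hA : ((-1:ℤ)) ^ (m' * n' + ((n' + 1) * (m' + 1) + 1)) = -((-1:ℤ)) ^ (m' + n' + 1) := by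
    have hodd : Odd (2 * (m' * n') + 1) := ⟨m' * n', by omega⟩
    rw [show m' * n' + ((n' + 1) * (m' + 1) + 1) = (m' + n' + 1) + (2 * (m' * n') + 1) by ring,
      pow_add, hodd.neg_one_pow, mul_neg_one]
  have hY : ((-1:ℤ)) ^ (m' * n' + (n' + m' + 1)) = (-1:ℤ) ^ (m' + n' + 1 + m' * n') := by
    congr 1
    ring
  rw [hC, hA, hY, neg_smul, neg_smul]
  abel
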